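/- Let σ be a 0-1 squashing function and K ⊆ ℝⁿ compact. For every continuous T : K → ℝᵐ and ε > 0, there exist f₁, …, f_m ∈ N₄ such that sup_{x∈K} ‖(f₁(x), …, f_m(x)) - T(x)‖ < ε (vector-valued universal approximation by three-hidden-layer networks). -/

import Mathlib

open Filter Topology

/-- A 0-1 squashing function: increasing, continuous, with limit 0 at -∞ and 1 at +∞. -/
def IsSquashing (σ : ℝ → ℝ) : Prop :=
  Monotone σ ∧ Continuous σ ∧
    Tendsto σ atBot (nhds 0) ∧ Tendsto σ atTop (nhds 1)

/-- `Net σ n k f` means `f ∈ 𝒩_k`: `𝒩₁` is the affine functions on `ℝⁿ`, and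
`𝒩_{k+1}` consists of affine combinations `a₀ + Σⱼ aⱼ σ(Fⱼ)` with `Fⱼ ∈ 𝒩_k`
(so the summands `σ ∘ Fⱼ` range over `𝒩_k^σ`). -/
inductive Net (σ : ℝ → ℝ) (n : ℕ) : ℕ → ((Fin n → ℝ) → ℝ) → Prop
  | affine (a₀ : ℝ) (a : Fin n → ℝ) : Net σ n 1 (fun x => a₀ + ∑ i, a i * x i)
  | comb (k m : ℕ) (F : Fin m → ((Fin n → ℝ) → ℝ)) (a₀ : ℝ) (a : Fin m → ℝ)
      (hF : ∀ j, Net σ n k (F j)) :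
      Net σ n (k + 1) (fun x => a₀ + ∑ j, a j * σ (F j x))

section Facts

variable {σ : ℝ → ℝ}

lemma squash_nonneg (hσ : IsSquashing σ) (t : ℝ) : 0 ≤ σ t :=
  le_of_tendsto hσ.2.2.1 (eventually_atBot.2 ⟨t, fun s hs => hσ.1 hs⟩)

lemma squash_le_one (hσ : IsSquashing σ) (t : ℝ) : σ t ≤ 1 :=
  ge_of_tendsto hσ.2.2.2 (eventually_atTop.2 ⟨t, fun s hs => hσ.1 hs⟩)

/-- Tail bound for the squasher. -/
lemma squash_tail (hσ : IsSquashing σ) {η : ℝ} (hη : 0 < η) :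
    ∃ C : ℝ, 0 < C ∧ (∀ s ≥ C, 1 - η ≤ σ s) ∧ (∀ s ≤ -C, σ s ≤ η) := by
  have h1 : ∀ᶠ s in atTop, |σ s - 1| < η := by
    have := Metric.tendsto_nhds.mp hσ.2.2.2 η hη
    simpa [Real.dist_eq] using this
  have h2 : ∀ᶠ s in atBot, |σ s - 0| < η := by
    have := Metric.tendsto_nhds.mp hσ.2.2.1 η hη
    simpa [Real.dist_eq] using this
  rcases eventually_atTop.1 h1 with ⟨C₁, hC₁⟩
  rcases eventually_atBot.1 h2 with ⟨C₂, hC₂⟩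
  refine ⟨max C₁ (max (-C₂) 1), by positivity, ?_, ?_⟩
  · intro s hs
    have := hC₁ s (le_trans (le_max_left _ _) hs)
    have := abs_lt.1 this
    linarith [this.1]
  · intro s hs
    have hs' : s ≤ C₂ := by
      have : -C₂ ≤ max C₁ (max (-C₂) 1) := le_trans (le_max_left _ _) (le_max_right _ _)
      linarith
    have := abs_lt.1 (hC₂ s hs')
    linarith [this.2]

end Facts

section NetClosure

variable {σ : ℝ → ℝ} {n : ℕ}

lemma Net.continuousOn (hσ : Continuous σ) {k : ℕ} {f : (Fin n → ℝ) → ℝ}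
    (h : Net σ n k f) : Continuous f := by
  induction h with
  | affine a₀ a => continuity
  | comb k m F a₀ a hF ih =>
      refine continuous_const.add (continuous_finset_sum _ fun j _ => ?_)
      exact continuous_const.mul (hσ.comp (ih j))

lemma net_const (k : ℕ) (c : ℝ) : Net σ n (k + 1) (fun _ => c) := by
  have h := Net.comb (σ := σ) (n := n) k 0 (fun j => j.elim0) c (fun j => j.elim0)
    (fun j => j.elim0)
  simpa using h

lemma net_add {k : ℕ} {f g : (Fin n → ℝ) → ℝ}
    (hf : Net σ n (k + 2) f) (hg : Net σ n (k + 2) g) :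
    Net σ n (k + 2) (fun x => f x + g x) := by
  cases hf with
  | comb _ m₁ F a₀ a hF =>
    cases hg with
    | comb _ m₂ G b₀ b hG =>
      have h := Net.comb (σ := σ) (n := n) (k + 1) (m₁ + m₂)
        (Fin.append F G) (a₀ + b₀) (Fin.append a b)
        (fun j => by
          refine Fin.addCases (fun i => ?_) (fun i => ?_) j
          · simpa [Fin.append_left] using hF i
          · simpa [Fin.append_right] using hG i)
      convert h using 2 with x
      rw [Fin.sum_univ_add]
      simp [Fin.append_left, Fin.append_right]
      ring

lemma net_smul {k : ℕ} {f : (Fin n → ℝ) → ℝ} (c : ℝ)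
    (hf : Net σ n (k + 2) f) : Net σ n (k + 2) (fun x => c * f x) := by
  cases hf with
  | comb _ m F a₀ a hF =>
    have h := Net.comb (σ := σ) (n := n) (k + 1) m F (c * a₀) (fun j => c * a j) hF
    convert h using 2 with x
    rw [mul_add, Finset.mul_sum]
    ring_nf

end NetClosure

set_option maxHeartbeats 1000000 in
lemma approx_1d {σ : ℝ → ℝ} (hσ : IsSquashing σ) (f : ℝ → ℝ) (hf : Continuous f)
    (M : ℝ) (hM : 0 < M) (ε : ℝ) (hε : 0 < ε) :
    ∃ (N : ℕ) (c₀ : ℝ) (c w b : Fin N → ℝ),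
      ∀ t ∈ Set.Icc (-M) M, |c₀ + ∑ j, c j * σ (w j * t + b j) - f t| < ε := by
  -- uniform continuity on [-M, M]
  have huc := (isCompact_Icc (a := -M) (b := M)).uniformContinuousOn_of_continuous
    hf.continuousOn
  rw [Metric.uniformContinuousOn_iff] at huc
  obtain ⟨δ, hδ, hδ'⟩ := huc (ε / 6) (by positivity)
  -- grid
  set N : ℕ := ⌈2 * M / δ⌉₊ + 1 with hNdef
  have hNpos : 0 < (N : ℝ) := by positivity
  have hNr : 2 * M / δ < (N : ℝ) := by
    have := Nat.le_ceil (2 * M / δ)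
    push_cast [hNdef]
    linarith
  set h : ℝ := 2 * M / N with hhdef
  have hh : 0 < h := by positivity
  have hhδ : h < δ := by
    rw [hhdef, div_lt_iff₀ hNpos]
    calc 2 * M = (2 * M / δ) * δ := by field_simp
    _ < N * δ := by apply mul_lt_mul_of_pos_right hNr hδ
    _ = δ * N := by ring
  set tj : ℕ → ℝ := fun j => -M + j * h with htj
  have htjmem : ∀ j : ℕ, j ≤ N → tj j ∈ Set.Icc (-M) M := by
    intro j hj
    constructor
    · simp only [htj]; nlinarith [mul_nonneg (Nat.cast_nonneg (α := ℝ) j) hh.le]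
    · simp only [htj]
      have : (j : ℝ) * h ≤ N * h := by
        apply mul_le_mul_of_nonneg_right _ hh.le
        exact_mod_cast hj
      have hNh : (N : ℝ) * h = 2 * M := by rw [hhdef]; field_simp
      linarith
  set c : ℕ → ℝ := fun j => f (tj (j + 1)) - f (tj j) with hc
  have hcbd : ∀ j : ℕ, j + 1 ≤ N → |c j| < ε / 6 := by
    intro j hj
    have h1 := htjmem (j + 1) hj
    have h2 := htjmem j (by omega)
    have := hδ' _ h1 _ h2 (by
      rw [Real.dist_eq]
      have : tj (j + 1) - tj j = h := by simp only [htj]; push_cast; ring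
      rw [this, abs_of_pos hh]; exact hhδ)
    rwa [Real.dist_eq] at this
  -- squasher scale
  obtain ⟨C, hC, hCtop, hCbot⟩ := squash_tail hσ (η := 1 / N) (by positivity)
  set k : ℝ := C / (h / 2) with hk
  have hkpos : 0 < k := by positivity
  have hkh : k * (h / 2) = C := by rw [hk]; field_simp
  -- heaviside
  set H : ℕ → ℝ → ℝ := fun j t => if tj j ≤ t then 1 else 0 with hH
  refine ⟨N, f (tj 0), fun j => c j, fun _ => k, fun j => -(k * tj j), ?_⟩
  intro t ht
  have hsum : ∑ j : Fin N, c j * σ (k * t + -(k * tj j)) =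
      ∑ j ∈ Finset.range N, c j * σ (k * (t - tj j)) := by
    rw [← Fin.sum_univ_eq_sum_range (fun j => c j * σ (k * (t - tj j))) N]
    apply Finset.sum_congr rfl
    intro j _
    congr 1
    ring
  -- claim 1 : sigma vs heaviside
  have claim1 : |∑ j ∈ Finset.range N, c j * (σ (k * (t - tj j)) - H j t)| ≤ ε / 6 + ε / 6 := by
    calc |∑ j ∈ Finset.range N, c j * (σ (k * (t - tj j)) - H j t)|
        ≤ ∑ j ∈ Finset.range N, |c j * (σ (k * (t - tj j)) - H j t)| :=
          Finset.abs_sum_le_sum_abs _ _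
      _ ≤ ∑ j ∈ Finset.range N, ((if |t - tj j| < h / 2 then ε / 6 else 0) + ε / 6 * (1 / (N : ℝ))) := by
          apply Finset.sum_le_sum
          intro j hj
          have hjN : j + 1 ≤ N := by simp at hj; omega
          have hcj := (hcbd j hjN).le
          have hσH : |σ (k * (t - tj j)) - H j t| ≤
              if |t - tj j| < h / 2 then (1 : ℝ) else 1 / (N : ℝ) := by
            have h1 := squash_nonneg hσ (k * (t - tj j))
            have h2 := squash_le_one hσ (k * (t - tj j))
            have h3 : 0 < 1 / (N : ℝ) := by positivity
            split_ifs with hbad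
            · simp only [hH]
              split_ifs with hle
              · rw [abs_sub_le_iff]; constructor <;> linarith
              · rw [abs_sub_le_iff]; constructor <;> linarith
            · push_neg at hbad
              rcases le_or_gt (tj j) t with hle | hlt
              · have hu : h / 2 ≤ t - tj j := by
                  rwa [abs_of_nonneg (by linarith)] at hbad
                have hCk : C ≤ k * (t - tj j) := by
                  rw [← hkh]; exact mul_le_mul_of_nonneg_left hu hkpos.le
                have h4 := hCtop _ hCk
                simp only [hH, if_pos hle]
                rw [abs_sub_le_iff]
                constructor <;> linarith
              · have hu : t - tj j ≤ -(h / 2) := by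
                  rw [abs_of_neg (by linarith)] at hbad
                  linarith
                have hCk : k * (t - tj j) ≤ -C := by
                  rw [← hkh]; nlinarith
                have h4 := hCbot _ hCk
                simp only [hH, if_neg (not_le.mpr hlt), sub_zero]
                rw [abs_of_nonneg h1]
                linarith
          rw [abs_mul]
          split_ifs with hbad
          · have : |c j| * |σ (k * (t - tj j)) - H j t| ≤ ε / 6 * 1 := by
              apply mul_le_mul hcj _ (abs_nonneg _) (by positivity)
              simpa [hbad] using hσH
            have hpos : 0 ≤ ε / 6 * (1 / (N : ℝ)) := by positivity
            linarith [this]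
          · have : |c j| * |σ (k * (t - tj j)) - H j t| ≤ ε / 6 * (1 / (N : ℝ)) := by
              apply mul_le_mul hcj _ (abs_nonneg _) (by positivity)
              simpa [hbad] using hσH
            linarith [this]
      _ ≤ ε / 6 + ε / 6 := by
          rw [Finset.sum_add_distrib]
          have e1 : ∑ j ∈ Finset.range N, (if |t - tj j| < h / 2 then ε / 6 else 0) ≤ ε / 6 := by
            rw [← Finset.sum_filter]
            have hcard : ((Finset.range N).filter (fun j => |t - tj j| < h / 2)).card ≤ 1 := by
              apply Finset.card_le_one.2
              intro a ha b hb
              simp only [Finset.mem_filter] at ha hb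
              by_contra hab
              have h1 : |tj a - tj b| < h := by
                calc |tj a - tj b| = |(tj a - t) + (t - tj b)| := by ring_nf
                  _ ≤ |tj a - t| + |t - tj b| := abs_add_le _ _
                  _ = |t - tj a| + |t - tj b| := by rw [abs_sub_comm]
                  _ < h / 2 + h / 2 := add_lt_add ha.2 hb.2
                  _ = h := by ring
              have h2 : h ≤ |tj a - tj b| := by
                have : tj a - tj b = ((a : ℝ) - b) * h := by simp only [htj]; ring
                rw [this, abs_mul, abs_of_pos hh]
                have hone : (1 : ℝ) ≤ |(a : ℝ) - b| := by
                  have hz : (1 : ℤ) ≤ |(a : ℤ) - (b : ℤ)| := Int.one_le_abs (by omega)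
                  have h5 : ((1 : ℤ) : ℝ) ≤ ((|(a : ℤ) - (b : ℤ)| : ℤ) : ℝ) := by
                    exact_mod_cast hz
                  push_cast at h5
                  exact h5
                nlinarith
              linarith
            calc ∑ j ∈ (Finset.range N).filter (fun j => |t - tj j| < h / 2), ε / 6
                = ((Finset.range N).filter (fun j => |t - tj j| < h / 2)).card * (ε / 6) := by
                  rw [Finset.sum_const, nsmul_eq_mul]
              _ ≤ 1 * (ε / 6) := by
                  apply mul_le_mul_of_nonneg_right _ (by positivity)
                  exact_mod_cast hcard
              _ = ε / 6 := one_mul _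
          have e2 : ∑ _j ∈ Finset.range N, ε / 6 * (1 / (N : ℝ)) = ε / 6 := by
            rw [Finset.sum_const, Finset.card_range, nsmul_eq_mul]
            field_simp
          linarith
  -- claim 2 : heaviside sum telescopes
  have ht1 : -M ≤ t := ht.1
  have ht2 : t ≤ M := ht.2
  have hfl0 : 0 ≤ (t + M) / h := div_nonneg (by linarith) hh.le
  set i : ℕ := ⌊(t + M) / h⌋₊ with hi
  set m : ℕ := min N (i + 1) with hm
  have hcond : ∀ j : ℕ, (tj j ≤ t ↔ j < i + 1) := by
    intro j
    constructor
    · intro hle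
      have h5 : (j : ℝ) ≤ (t + M) / h := by
        rw [le_div_iff₀ hh]
        simp only [htj] at hle
        linarith
      have := Nat.le_floor h5
      omega
    · intro hlt
      have hj : j ≤ i := by omega
      have h5 : (j : ℝ) ≤ (t + M) / h :=
        le_trans (by exact_mod_cast hj) (Nat.floor_le hfl0)
      rw [le_div_iff₀ hh] at h5
      simp only [htj]
      linarith
  have claim2 : f (tj 0) + ∑ j ∈ Finset.range N, c j * H j t = f (tj m) := by
    have e1 : ∀ j : ℕ, c j * H j t = if j < i + 1 then c j else 0 := by
      intro j
      simp only [hH]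
      by_cases hcase : tj j ≤ t
      · simp [hcase, (hcond j).1 hcase]
      · have hni : ¬ (j < i + 1) := fun hlt => hcase ((hcond j).2 hlt)
        simp [hcase, hni]
    rw [Finset.sum_congr rfl (fun j _ => e1 j), ← Finset.sum_filter]
    have e2 : (Finset.range N).filter (fun j => j < i + 1) = Finset.range m := by
      ext j
      simp only [Finset.mem_filter, Finset.mem_range, hm]
      omega
    rw [e2]
    have e3 : ∑ j ∈ Finset.range m, c j = f (tj m) - f (tj 0) := by
      simpa [hc] using Finset.sum_range_sub (fun j => f (tj j)) m
    rw [e3]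
    ring
  have hmN : m ≤ N := min_le_left _ _
  have hNh : (N : ℝ) * h = 2 * M := by rw [hhdef]; field_simp
  have htjm : |tj m - t| < δ := by
    rcases le_or_gt (i + 1) N with hcase | hcase
    · have hmval : m = i + 1 := by omega
      have hfloor1 : (t + M) / h < (i : ℝ) + 1 := Nat.lt_floor_add_one _
      have hfloor2 : (i : ℝ) ≤ (t + M) / h := Nat.floor_le hfl0
      rw [div_lt_iff₀ hh] at hfloor1
      rw [le_div_iff₀ hh] at hfloor2
      have hup : t < tj (i + 1) := by
        simp only [htj]; push_cast; linarith
      have hlow : tj (i + 1) ≤ t + h := by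
        simp only [htj]; push_cast; linarith
      rw [hmval, abs_of_pos (by linarith)]
      linarith
    · have hmval : m = N := by omega
      have h6 : (i : ℝ) ≤ (t + M) / h := Nat.floor_le hfl0
      have h7 : (N : ℝ) ≤ (i : ℝ) := by exact_mod_cast (by omega : N ≤ i)
      have h8 : (N : ℝ) * h ≤ t + M := (le_div_iff₀ hh).mp (h7.trans h6)
      have h9 : M ≤ t := by linarith [hNh]
      have h10 : tj N = M := by simp only [htj]; linarith [hNh]
      rw [hmval, h10]
      have : t = M := le_antisymm ht2 h9
      simp [this, hδ]
  have hfm : |f (tj m) - f t| < ε / 6 := by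
    have := hδ' _ (htjmem m hmN) _ ht (by rw [Real.dist_eq]; exact htjm)
    rwa [Real.dist_eq] at this
  rw [hsum]
  have decomp : f (tj 0) + (∑ j ∈ Finset.range N, c j * σ (k * (t - tj j))) - f t
      = (∑ j ∈ Finset.range N, c j * (σ (k * (t - tj j)) - H j t)) + (f (tj m) - f t) := by
    have e4 : ∑ j ∈ Finset.range N, c j * (σ (k * (t - tj j)) - H j t)
        = (∑ j ∈ Finset.range N, c j * σ (k * (t - tj j)))
          - ∑ j ∈ Finset.range N, c j * H j t := by
      rw [← Finset.sum_sub_distrib]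
      apply Finset.sum_congr rfl
      intro j _
      ring
    rw [e4, ← claim2]
    ring
  calc |f (tj 0) + (∑ j ∈ Finset.range N, c j * σ (k * (t - tj j))) - f t|
      = |(∑ j ∈ Finset.range N, c j * (σ (k * (t - tj j)) - H j t)) + (f (tj m) - f t)| := by
        rw [decomp]
    _ ≤ |∑ j ∈ Finset.range N, c j * (σ (k * (t - tj j)) - H j t)| + |f (tj m) - f t| :=
        abs_add_le _ _
    _ < ε := by linarith

section Dense2

variable {σ : ℝ → ℝ} {n : ℕ} {K : Set (Fin n → ℝ)}

/-- A σ-combination of scaled copies of one affine function lies in `𝒩₂`. -/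
lemma net2_of_affine_comb (N : ℕ) (c₀ : ℝ) (c w b : Fin N → ℝ) (ℓ₀ : ℝ) (ℓ : Fin n → ℝ) :
    Net σ n 2 (fun x => c₀ + ∑ j, c j * σ (w j * (ℓ₀ + ∑ i, ℓ i * x i) + b j)) := by
  have h := Net.comb (σ := σ) (n := n) 1 N
    (fun j x => (w j * ℓ₀ + b j) + ∑ i, (w j * ℓ i) * x i) c₀ c
    (fun j => Net.affine _ _)
  have e : (fun x : Fin n → ℝ => c₀ + ∑ j, c j * σ (w j * (ℓ₀ + ∑ i, ℓ i * x i) + b j))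
      = (fun x : Fin n → ℝ => c₀ + ∑ j, c j * σ ((w j * ℓ₀ + b j) + ∑ i, (w j * ℓ i) * x i)) := by
    funext x
    congr 1
    apply Finset.sum_congr rfl
    intro j _
    have harg : w j * (ℓ₀ + ∑ i, ℓ i * x i) + b j
        = (w j * ℓ₀ + b j) + ∑ i, (w j * ℓ i) * x i := by
      simp only [mul_add, Finset.mul_sum, mul_assoc]
      ring
    rw [harg]
  rw [e]
  exact h

/-- `𝒩₂` approximates `exp ∘ affine` on the compact set `K`. -/
lemma gen_approx (hσ : IsSquashing σ) (hK : IsCompact K) (ℓ₀ : ℝ) (ℓ : Fin n → ℝ)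
    (ε : ℝ) (hε : 0 < ε) :
    ∃ f, Net σ n 2 f ∧ ∀ x ∈ K, |f x - Real.exp (ℓ₀ + ∑ i, ℓ i * x i)| < ε := by
  have haff : Continuous (fun x : Fin n → ℝ => ℓ₀ + ∑ i, ℓ i * x i) := by
    refine continuous_const.add (continuous_finset_sum _ fun i _ => ?_)
    exact continuous_const.mul (continuous_apply i)
  obtain ⟨M₀, hM₀⟩ := hK.exists_bound_of_continuousOn haff.continuousOn
  set M : ℝ := max M₀ 1 with hM
  have hMpos : 0 < M := lt_of_lt_of_le one_pos (le_max_right _ _)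
  obtain ⟨N, c₀, c, w, b, hcb⟩ := approx_1d hσ Real.exp Real.continuous_exp M hMpos ε hε
  refine ⟨_, net2_of_affine_comb N c₀ c w b ℓ₀ ℓ, ?_⟩
  intro x hx
  apply hcb
  have := hM₀ x hx
  rw [Real.norm_eq_abs, abs_le] at this
  constructor
  · linarith [this.1, le_max_left M₀ (1:ℝ)]
  · linarith [this.2, le_max_left M₀ (1:ℝ)]

theorem dense2 (hσ : IsSquashing σ) (hK : IsCompact K)
    (g : (Fin n → ℝ) → ℝ) (hg : ContinuousOn g K) (ε : ℝ) (hε : 0 < ε) :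
    ∃ f, Net σ n 2 f ∧ ∀ x ∈ K, |f x - g x| < ε := by
  haveI : CompactSpace K := isCompact_iff_compactSpace.mp hK
  -- the generators : exp ∘ affine, as continuous maps on K
  have hgencont : ∀ (ℓ₀ : ℝ) (ℓ : Fin n → ℝ),
      Continuous (fun x : K => Real.exp (ℓ₀ + ∑ i, ℓ i * x.1 i)) := by
    intro ℓ₀ ℓ
    refine Real.continuous_exp.comp (continuous_const.add (continuous_finset_sum _ fun i _ => ?_))
    exact continuous_const.mul ((continuous_apply i).comp continuous_subtype_val)
  let gen : ℝ → (Fin n → ℝ) → C(K, ℝ) := fun ℓ₀ ℓ =>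
    ⟨fun x => Real.exp (ℓ₀ + ∑ i, ℓ i * x.1 i), hgencont ℓ₀ ℓ⟩
  set E : Set C(K, ℝ) := Set.range (fun q : ℝ × (Fin n → ℝ) => gen q.1 q.2) with hE
  have hmulE : ∀ p ∈ E, ∀ q ∈ E, p * q ∈ E := by
    rintro _ ⟨⟨a, ℓ⟩, rfl⟩ _ ⟨⟨a', ℓ'⟩, rfl⟩
    refine ⟨⟨a + a', ℓ + ℓ'⟩, ?_⟩
    ext x
    simp only [gen, ContinuousMap.coe_mk, ContinuousMap.mul_apply, ← Real.exp_add]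
    congr 1
    simp only [Pi.add_apply, add_mul, Finset.sum_add_distrib]
    ring
  have honeE : (1 : C(K, ℝ)) ∈ E := by
    refine ⟨⟨0, 0⟩, ?_⟩
    ext x
    simp [gen]
  set S : Submodule ℝ C(K, ℝ) := Submodule.span ℝ E with hS
  have hmulS : ∀ p ∈ S, ∀ q ∈ S, p * q ∈ S := by
    intro p hp
    induction hp using Submodule.span_induction with
    | mem u hu =>
      intro q hq
      induction hq using Submodule.span_induction with
      | mem v hv => exact Submodule.subset_span (hmulE u hu v hv)
      | zero => simpa using S.zero_mem
      | add v w hv hw ihv ihw => simpa [mul_add] using S.add_mem ihv ihw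
      | smul r v hv ihv => simpa [mul_smul_comm] using S.smul_mem r ihv
    | zero => intro q hq; simpa using S.zero_mem
    | add u v hu hv ihu ihv =>
      intro q hq
      simpa [add_mul] using S.add_mem (ihu q hq) (ihv q hq)
    | smul r u hu ihu =>
      intro q hq
      simpa [smul_mul_assoc] using S.smul_mem r (ihu q hq)
  let S' : Subalgebra ℝ C(K, ℝ) :=
    { carrier := (S : Set C(K, ℝ))
      mul_mem' := fun ha hb => hmulS _ ha _ hb
      one_mem' := Submodule.subset_span honeE
      add_mem' := fun ha hb => S.add_mem ha hb
      zero_mem' := S.zero_mem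
      algebraMap_mem' := fun r => by
        have : (algebraMap ℝ C(K, ℝ)) r = r • (1 : C(K, ℝ)) :=
          Algebra.algebraMap_eq_smul_one r
        rw [this]
        exact S.smul_mem r (Submodule.subset_span honeE) }
  have hsep : S'.SeparatesPoints := by
    intro x y hxy
    have : ∃ i, x.1 i ≠ y.1 i := by
      by_contra hcon
      push_neg at hcon
      exact hxy (Subtype.ext (funext hcon))
    obtain ⟨i, hi⟩ := this
    refine ⟨_, ⟨gen 0 (Pi.single i 1),
      Submodule.subset_span ⟨⟨0, Pi.single i 1⟩, rfl⟩, rfl⟩, ?_⟩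
    have hval : ∀ z : K, gen 0 (Pi.single i 1) z = Real.exp (z.1 i) := by
      intro z
      simp only [gen, ContinuousMap.coe_mk]
      congr 1
      rw [zero_add]
      rw [Finset.sum_eq_single i]
      · simp
      · intro j _ hj; simp [Pi.single_apply, hj]
      · intro hj; simp at hj
    show (gen 0 (Pi.single i 1)) x ≠ (gen 0 (Pi.single i 1)) y
    rw [hval x, hval y]
    exact fun hc => hi (Real.exp_injective hc)
  -- Stone–Weierstrass
  set g' : C(K, ℝ) := ⟨K.restrict g, hg.restrict⟩ with hg'
  obtain ⟨⟨p, hpS⟩, hpnear⟩ :=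
    ContinuousMap.exists_mem_subalgebra_near_continuousMap_of_separatesPoints S' hsep g'
      (ε / 2) (by positivity)
  -- every element of the span is 𝒩₂-approximable
  have approxS : ∀ p' ∈ S, ∀ η : ℝ, 0 < η →
      ∃ f, Net σ n 2 f ∧ ∀ x : K, |f x.1 - p' x| < η := by
    intro p' hp'
    induction hp' using Submodule.span_induction with
    | mem u hu =>
      obtain ⟨⟨ℓ₀, ℓ⟩, rfl⟩ := hu
      intro η hη
      obtain ⟨f, hf, hfapp⟩ := gen_approx hσ hK ℓ₀ ℓ η hη
      exact ⟨f, hf, fun x => hfapp x.1 x.2⟩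
    | zero =>
      intro η hη
      exact ⟨fun _ => 0, net_const 1 0, fun x => by simpa using hη⟩
    | add u v hu hv ihu ihv =>
      intro η hη
      obtain ⟨f₁, hf₁, h₁⟩ := ihu (η / 2) (by positivity)
      obtain ⟨f₂, hf₂, h₂⟩ := ihv (η / 2) (by positivity)
      refine ⟨fun x => f₁ x + f₂ x, net_add (k := 0) hf₁ hf₂, fun x => ?_⟩
      have := abs_add_le (f₁ x.1 - u x) (f₂ x.1 - v x)
      simp only [ContinuousMap.add_apply]
      calc |f₁ x.1 + f₂ x.1 - (u x + v x)|
          = |(f₁ x.1 - u x) + (f₂ x.1 - v x)| := by ring_nf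
        _ ≤ |f₁ x.1 - u x| + |f₂ x.1 - v x| := abs_add_le _ _
        _ < η / 2 + η / 2 := add_lt_add (h₁ x) (h₂ x)
        _ = η := by ring
    | smul r u hu ihu =>
      intro η hη
      obtain ⟨f, hf, hfapp⟩ := ihu (η / (|r| + 1)) (by positivity)
      refine ⟨fun x => r * f x, net_smul (k := 0) r hf, fun x => ?_⟩
      simp only [ContinuousMap.smul_apply, smul_eq_mul]
      calc |r * f x.1 - r * u x| = |r| * |f x.1 - u x| := by
            rw [← abs_mul]; ring_nf
        _ ≤ |r| * (η / (|r| + 1)) := by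
            apply mul_le_mul_of_nonneg_left (hfapp x).le (abs_nonneg r)
        _ < η := by
            have h1 : |r| * (η / (|r| + 1)) < (|r| + 1) * (η / (|r| + 1)) :=
              mul_lt_mul_of_pos_right (by linarith) (by positivity)
            have h2 : (|r| + 1) * (η / (|r| + 1)) = η := by field_simp
            linarith
  have hpS' : p ∈ S := hpS
  obtain ⟨f, hf, hfapp⟩ := approxS p hpS' (ε / 2) (by positivity)
  refine ⟨f, hf, fun x hx => ?_⟩
  have h1 := hfapp ⟨x, hx⟩
  have h2 : |p ⟨x, hx⟩ - g x| < ε / 2 := by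
    have hb := ContinuousMap.norm_coe_le_norm (p - g') ⟨x, hx⟩
    simp only [ContinuousMap.sub_apply, Real.norm_eq_abs] at hb
    have hgx : g' ⟨x, hx⟩ = g x := rfl
    calc |p ⟨x, hx⟩ - g x| = |p ⟨x, hx⟩ - g' ⟨x, hx⟩| := by rw [hgx]
      _ ≤ ‖p - g'‖ := hb
      _ < ε / 2 := hpnear
  calc |f x - g x| = |(f x - p ⟨x, hx⟩) + (p ⟨x, hx⟩ - g x)| := by congr 1; ring
    _ ≤ |f x - p ⟨x, hx⟩| + |p ⟨x, hx⟩ - g x| := abs_add_le _ _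
    _ < ε / 2 + ε / 2 := add_lt_add h1 h2
    _ = ε := by ring

end Dense2

section Lift

variable {σ : ℝ → ℝ} {n : ℕ} {K : Set (Fin n → ℝ)}

theorem denseSucc (hσ : IsSquashing σ) (hK : IsCompact K) (k : ℕ)
    (hD : ∀ g', ContinuousOn g' K → ∀ ε' : ℝ, 0 < ε' →
      ∃ F, Net σ n (k + 1) F ∧ ∀ x ∈ K, |F x - g' x| < ε')
    (g : (Fin n → ℝ) → ℝ) (hg : ContinuousOn g K) (ε : ℝ) (hε : 0 < ε) :
    ∃ f, Net σ n (k + 2) f ∧ ∀ x ∈ K, |f x - g x| < ε := by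
  obtain ⟨f₂, hf₂, happ⟩ := dense2 hσ hK g hg (ε / 2) (by positivity)
  cases hf₂ with
  | comb _ m F a₀ a hF =>
    set S : ℝ := ∑ j, |a j| with hSdef
    have hSpos : 0 < S + 1 := by positivity
    set η : ℝ := ε / (2 * (S + 1)) with hη
    have hηpos : 0 < η := by positivity
    have hdata : ∀ j : Fin m, ∃ G, Net σ n (k + 1) G ∧
        ∀ x ∈ K, |σ (G x) - σ (F j x)| < η := by
      intro j
      have hFc : Continuous (F j) := (hF j).continuousOn hσ.2.1
      obtain ⟨M, hM⟩ := hK.exists_bound_of_continuousOn hFc.continuousOn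
      have hucσ := (isCompact_Icc (a := -(M + 1)) (b := M + 1)).uniformContinuousOn_of_continuous
        hσ.2.1.continuousOn
      rw [Metric.uniformContinuousOn_iff] at hucσ
      obtain ⟨δ, hδ, hδ'⟩ := hucσ η hηpos
      obtain ⟨G, hG, hGapp⟩ := hD (F j) hFc.continuousOn (min δ 1) (by positivity)
      refine ⟨G, hG, fun x hx => ?_⟩
      have h1 := hM x hx
      rw [Real.norm_eq_abs, abs_le] at h1
      have h2 := hGapp x hx
      have h2' := abs_lt.1 (lt_of_lt_of_le h2 (min_le_right δ 1))
      have hmemF : F j x ∈ Set.Icc (-(M + 1)) (M + 1) := by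
        constructor <;> [linarith [h1.1]; linarith [h1.2]]
      have hmemG : G x ∈ Set.Icc (-(M + 1)) (M + 1) := by
        constructor <;> [linarith [h1.1, h2'.1]; linarith [h1.2, h2'.2]]
      have := hδ' (G x) hmemG (F j x) hmemF (by
        rw [Real.dist_eq]
        exact lt_of_lt_of_le h2 (min_le_left δ 1))
      rwa [Real.dist_eq] at this
    choose G hG hGapp using hdata
    refine ⟨fun x => a₀ + ∑ j, a j * σ (G j x), Net.comb (k + 1) m G a₀ a hG, ?_⟩
    intro x hx
    have hdiff : |(a₀ + ∑ j, a j * σ (G j x)) - (a₀ + ∑ j, a j * σ (F j x))| ≤ S * η := by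
      have e1 : ∑ j, a j * (σ (G j x) - σ (F j x))
          = (∑ j, a j * σ (G j x)) - ∑ j, a j * σ (F j x) := by
        rw [← Finset.sum_sub_distrib]
        apply Finset.sum_congr rfl
        intro j _
        ring
      have e2 : (a₀ + ∑ j, a j * σ (G j x)) - (a₀ + ∑ j, a j * σ (F j x))
          = ∑ j, a j * (σ (G j x) - σ (F j x)) := by
        rw [e1]
        ring
      rw [e2]
      calc |∑ j, a j * (σ (G j x) - σ (F j x))|
          ≤ ∑ j, |a j * (σ (G j x) - σ (F j x))| := Finset.abs_sum_le_sum_abs _ _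
        _ ≤ ∑ j, |a j| * η := by
            apply Finset.sum_le_sum
            intro j _
            rw [abs_mul]
            exact mul_le_mul_of_nonneg_left (hGapp j x hx).le (abs_nonneg _)
        _ = S * η := by rw [hSdef, Finset.sum_mul]
    have hSη : S * η < ε / 2 := by
      have h3 : S * η < (S + 1) * η := mul_lt_mul_of_pos_right (by linarith) hηpos
      have h4 : (S + 1) * η = ε / 2 := by
        rw [hη]
        field_simp
      linarith
    have h5 := happ x hx
    calc |(a₀ + ∑ j, a j * σ (G j x)) - g x|
        = |((a₀ + ∑ j, a j * σ (G j x)) - (a₀ + ∑ j, a j * σ (F j x)))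
            + ((a₀ + ∑ j, a j * σ (F j x)) - g x)| := by congr 1; ring
      _ ≤ |(a₀ + ∑ j, a j * σ (G j x)) - (a₀ + ∑ j, a j * σ (F j x))|
            + |(a₀ + ∑ j, a j * σ (F j x)) - g x| := abs_add_le _ _
      _ < ε / 2 + ε / 2 := by
          exact add_lt_add_of_le_of_lt (le_trans hdiff hSη.le) h5
      _ = ε := by ring

end Lift

theorem stmt14 (σ : ℝ → ℝ) (hσ : IsSquashing σ)
    (n m : ℕ) (K : Set (Fin n → ℝ)) (hK : IsCompact K)
    (T : (Fin n → ℝ) → (Fin m → ℝ)) (hT : ContinuousOn T K)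
    (ε : ℝ) (hε : 0 < ε) :
    ∃ f : Fin m → ((Fin n → ℝ) → ℝ), (∀ i, Net σ n 4 (f i)) ∧
      ∀ x ∈ K, ‖(fun i => f i x) - T x‖ < ε := by
  have D2 : ∀ g, ContinuousOn g K → ∀ ε' : ℝ, 0 < ε' →
      ∃ f, Net σ n (1 + 1) f ∧ ∀ x ∈ K, |f x - g x| < ε' :=
    fun g hg ε' hε' => dense2 hσ hK g hg ε' hε'
  have D3 : ∀ g, ContinuousOn g K → ∀ ε' : ℝ, 0 < ε' →
      ∃ f, Net σ n (2 + 1) f ∧ ∀ x ∈ K, |f x - g x| < ε' :=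
    fun g hg ε' hε' => denseSucc hσ hK 1 D2 g hg ε' hε'
  have D4 : ∀ g, ContinuousOn g K → ∀ ε' : ℝ, 0 < ε' →
      ∃ f, Net σ n 4 f ∧ ∀ x ∈ K, |f x - g x| < ε' :=
    fun g hg ε' hε' => denseSucc hσ hK 2 D3 g hg ε' hε'
  have hTi : ∀ i, ContinuousOn (fun x => T x i) K := fun i =>
    (continuous_apply i).comp_continuousOn hT
  choose f hf hfapp using fun i => D4 (fun x => T x i) (hTi i) ε hε
  refine ⟨f, hf, fun x hx => ?_⟩
  rw [pi_norm_lt_iff hε]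
  intro i
  have := hfapp i x hx
  simpa [Real.norm_eq_abs, Pi.sub_apply] using this
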